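/- Let f : 2^N → ℝ be a non-negative submodular function on a finite ground set N, let S, A ⊆ N, and let k be an integer with 1 ≤ k < |A|. Then the average over all size-k subsets B of A satisfies (1/binom(|A|,k)) · Σ_{B ⊆ A, |B| = k} f(S \ B) ≥ f(S) − (k/(|A| − k)) · max{ f(S') : S' ⊆ S ∩ A, |S'| ≥ |S ∩ A| − k }. -/

import Mathlib

open Finset

/-- A set function on a finite ground set is submodular. -/
def Submodular {α : Type*} [DecidableEq α] (f : Finset α → ℝ) : Prop :=
  ∀ A B : Finset α, f A + f B ≥ f (A ∪ B) + f (A ∩ B)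

lemma sum_powersetCard_swap {α : Type*} [DecidableEq α] (A : Finset α) (i j : ℕ)
    (hij : i ≤ j) (h : Finset α → ℝ) :
    ∑ D ∈ A.powersetCard j, ∑ E ∈ D.powersetCard i, h E
      = ((A.card - i).choose (j - i) : ℝ) * ∑ E ∈ A.powersetCard i, h E := by
  rw [Finset.sum_comm' (s' := fun E => (A.powersetCard j).filter (fun D => E ⊆ D))
    (t' := A.powersetCard i) (fun D E => by
      simp only [Finset.mem_powersetCard, Finset.mem_filter]
      constructor
      · rintro ⟨⟨hDA, hDc⟩, hED, hEc⟩
        exact ⟨⟨⟨hDA, hDc⟩, hED⟩, hED.trans hDA, hEc⟩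
      · rintro ⟨⟨⟨hDA, hDc⟩, hED⟩, _, hEc⟩
        exact ⟨⟨hDA, hDc⟩, hED, hEc⟩)]
  rw [Finset.mul_sum]
  refine Finset.sum_congr rfl fun E hE => ?_
  obtain ⟨hEA, hEc⟩ := Finset.mem_powersetCard.mp hE
  have hcard : ((A.powersetCard j).filter (fun D => E ⊆ D)).card
      = (A.card - i).choose (j - i) := by
    have : ((A.powersetCard j).filter (fun D => E ⊆ D)).card
        = ((A \ E).powersetCard (j - i)).card := by
      apply Finset.card_nbij' (fun D => D \ E) (fun F => F ∪ E)
      · intro D hD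
        simp only [Finset.mem_coe, Finset.mem_filter, Finset.mem_powersetCard] at hD
        obtain ⟨⟨hDA, hDc⟩, hED⟩ := hD
        refine Finset.mem_powersetCard.mpr ⟨Finset.sdiff_subset_sdiff hDA (le_refl E), ?_⟩
        rw [Finset.card_sdiff_of_subset hED, hDc, hEc]
      · intro F hF
        obtain ⟨hFA, hFc⟩ := Finset.mem_powersetCard.mp hF
        have hdisj : Disjoint F E := Disjoint.mono_left hFA sdiff_disjoint
        refine Finset.mem_filter.mpr ⟨Finset.mem_powersetCard.mpr ⟨?_, ?_⟩,
          Finset.subset_union_right⟩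
        · exact Finset.union_subset (hFA.trans Finset.sdiff_subset) hEA
        · rw [Finset.card_union_of_disjoint hdisj, hFc, hEc, Nat.sub_add_cancel hij]
      · intro D hD
        simp only [Finset.mem_coe, Finset.mem_filter, Finset.mem_powersetCard] at hD
        exact Finset.sdiff_union_of_subset hD.2
      · intro F hF
        obtain ⟨hFA, _⟩ := Finset.mem_powersetCard.mp hF
        exact Finset.union_sdiff_cancel_right (Disjoint.mono_left hFA sdiff_disjoint)
    rw [this, Finset.card_powersetCard, Finset.card_sdiff_of_subset hEA, hEc]
  rw [Finset.sum_const, hcard, nsmul_eq_mul]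

theorem average_removal_lower_bound {α : Type*} [DecidableEq α] [Fintype α]
    (f : Finset α → ℝ) (hf0 : ∀ S : Finset α, 0 ≤ f S) (hf : Submodular f)
    (S A : Finset α) (k : ℕ) (hk1 : 1 ≤ k) (hk : k < A.card) :
    (1 / (A.card.choose k : ℝ)) * ∑ B ∈ A.powersetCard k, f (S \ B) ≥
      f S - ((k : ℝ) / ((A.card : ℝ) - (k : ℝ))) *
        sSup {y : ℝ | ∃ S' : Finset α, S' ⊆ S ∩ A ∧ (S ∩ A).card - k ≤ S'.card ∧ y = f S'} := by
  classical
  set n := A.card with hn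
  set T := S ∩ A with hTdef
  set Mset : Set ℝ := {y : ℝ | ∃ S' : Finset α, S' ⊆ T ∧ T.card - k ≤ S'.card ∧ y = f S'}
    with hMset
  set M := sSup Mset with hMdef
  have hkn : k ≤ n := hk.le
  -- boundedness of Mset
  have hbdd : BddAbove Mset := by
    apply BddAbove.mono (t := ↑((Finset.univ : Finset (Finset α)).image f))
    · rintro y ⟨S', _, _, rfl⟩
      simp only [Finset.coe_image, Set.mem_image, Finset.mem_coe]
      exact ⟨S', by simp, rfl⟩
    · exact Finset.bddAbove _
  have le_M : ∀ C : Finset α, C.card ≤ k → f (T \ C) ≤ M := by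
    intro C hC
    apply le_csSup hbdd
    refine ⟨T \ C, Finset.sdiff_subset, ?_, rfl⟩
    have h1 : T.card ≤ (T \ C).card + C.card := Finset.card_le_card_sdiff_add_card
    omega
  have hM0 : 0 ≤ M := by
    have := le_M ∅ (by simp)
    simp only [Finset.sdiff_empty] at this
    exact le_trans (hf0 T) this
  -- the averages
  set g : ℕ → ℝ := fun i => (∑ C ∈ A.powersetCard i, f (T \ C)) / (n.choose i : ℝ) with hgdef
  have hg0 : ∀ i, 0 ≤ g i := fun i =>
    div_nonneg (Finset.sum_nonneg fun C _ => hf0 _) (Nat.cast_nonneg _)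
  have hchoosepos : ∀ i, i ≤ n → (0 : ℝ) < (n.choose i : ℝ) := fun i hi => by
    exact_mod_cast Nat.choose_pos hi
  have hgM : ∀ i, i ≤ k → g i ≤ M := by
    intro i hik
    have hpos := hchoosepos i (hik.trans hkn)
    rw [hgdef]
    rw [div_le_iff₀ hpos]
    calc ∑ C ∈ A.powersetCard i, f (T \ C)
        ≤ (A.powersetCard i).card • M := by
          apply Finset.sum_le_card_nsmul
          intro C hC
          obtain ⟨_, hCc⟩ := Finset.mem_powersetCard.mp hC
          exact le_M C (by omega)
      _ = M * (n.choose i : ℝ) := by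
          rw [Finset.card_powersetCard, nsmul_eq_mul, mul_comm]
  have hSg : ∀ i, i ≤ n → ∑ C ∈ A.powersetCard i, f (T \ C) = (n.choose i : ℝ) * g i := by
    intro i hi
    rw [hgdef, mul_div_cancel₀ _ (ne_of_gt (hchoosepos i hi))]
  -- key submodularity inequality per j
  have hkey : ∀ j, k ≤ j → j ≤ n → f T + g j ≤ g (j - k) + g k := by
    intro j hkj hjn
    -- pointwise inequality
    have hpt : ∀ D ∈ A.powersetCard j, ∀ B ∈ D.powersetCard k,
        f T + f (T \ D) ≤ f (T \ (D \ B)) + f (T \ B) := by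
      intro D hD B hB
      obtain ⟨hBD, hBc⟩ := Finset.mem_powersetCard.mp hB
      have hsub := hf (T \ (D \ B)) (T \ B)
      have hu : (T \ (D \ B)) ∪ (T \ B) = T := by
        ext x
        simp only [Finset.mem_union, Finset.mem_sdiff]
        tauto
      have hi : (T \ (D \ B)) ∩ (T \ B) = T \ D := by
        ext x
        simp only [Finset.mem_inter, Finset.mem_sdiff]
        constructor
        · tauto
        · rintro ⟨hxT, hxD⟩
          exact ⟨⟨hxT, fun h => hxD h.1⟩, hxT, fun hxB => hxD (hBD hxB)⟩
      rw [hu, hi] at hsub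
      linarith
    -- summed inequality
    have hsum : ∑ D ∈ A.powersetCard j, ∑ B ∈ D.powersetCard k, (f T + f (T \ D))
        ≤ ∑ D ∈ A.powersetCard j, ∑ B ∈ D.powersetCard k, (f (T \ (D \ B)) + f (T \ B)) := by
      refine Finset.sum_le_sum fun D hD => Finset.sum_le_sum fun B hB => hpt D hD B hB
    -- compute LHS
    have hLHS : ∑ D ∈ A.powersetCard j, ∑ B ∈ D.powersetCard k, (f T + f (T \ D))
        = (j.choose k : ℝ) * ((n.choose j : ℝ) * f T + (n.choose j : ℝ) * g j) := by
      have step : ∀ D ∈ A.powersetCard j, ∑ B ∈ D.powersetCard k, (f T + f (T \ D))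
          = (j.choose k : ℝ) * (f T + f (T \ D)) := by
        intro D hD
        obtain ⟨_, hDc⟩ := Finset.mem_powersetCard.mp hD
        rw [Finset.sum_const, Finset.card_powersetCard, hDc, nsmul_eq_mul]
      rw [Finset.sum_congr rfl step, ← Finset.mul_sum, Finset.sum_add_distrib,
        Finset.sum_const, Finset.card_powersetCard, nsmul_eq_mul, hSg j hjn]
    -- compute RHS
    have hbij : ∀ D ∈ A.powersetCard j,
        ∑ B ∈ D.powersetCard k, f (T \ (D \ B)) = ∑ E ∈ D.powersetCard (j - k), f (T \ E) := by
      intro D hD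
      obtain ⟨_, hDc⟩ := Finset.mem_powersetCard.mp hD
      apply Finset.sum_nbij' (fun B => D \ B) (fun E => D \ E)
      · intro B hB
        obtain ⟨hBD, hBc⟩ := Finset.mem_powersetCard.mp hB
        exact Finset.mem_powersetCard.mpr ⟨Finset.sdiff_subset, by
          rw [Finset.card_sdiff_of_subset hBD, hDc, hBc]⟩
      · intro E hE
        obtain ⟨hED, hEc⟩ := Finset.mem_powersetCard.mp hE
        refine Finset.mem_powersetCard.mpr ⟨Finset.sdiff_subset, ?_⟩
        rw [Finset.card_sdiff_of_subset hED, hDc, hEc]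
        omega
      · intro B hB
        exact Finset.sdiff_sdiff_eq_self (Finset.mem_powersetCard.mp hB).1
      · intro E hE
        exact Finset.sdiff_sdiff_eq_self (Finset.mem_powersetCard.mp hE).1
      · intro B hB; rfl
    have hRHS1 : ∑ D ∈ A.powersetCard j, ∑ B ∈ D.powersetCard k, f (T \ (D \ B))
        = ((n - (j - k)).choose k : ℝ) * ((n.choose (j - k) : ℝ) * g (j - k)) := by
      rw [Finset.sum_congr rfl hbij, sum_powersetCard_swap A (j - k) j (Nat.sub_le j k)
        (fun E => f (T \ E)), ← hSg (j - k) (le_trans (Nat.sub_le j k) hjn),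
        Nat.sub_sub_self hkj]
    have hRHS2 : ∑ D ∈ A.powersetCard j, ∑ B ∈ D.powersetCard k, f (T \ B)
        = ((n - k).choose (j - k) : ℝ) * ((n.choose k : ℝ) * g k) := by
      rw [sum_powersetCard_swap A k j hkj (fun B => f (T \ B)), ← hSg k hkn]
    -- binomial identities
    have hid1 : n.choose j * j.choose k = n.choose k * (n - k).choose (j - k) :=
      Nat.choose_mul hkj
    have hid2 : n.choose j * j.choose k = n.choose (j - k) * (n - (j - k)).choose k := by
      have := Nat.choose_mul (n := n) (k := j) (s := j - k) (Nat.sub_le j k)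
      rwa [Nat.choose_symm hkj, Nat.sub_sub_self hkj] at this
    have hcd : (0 : ℝ) < (n.choose j : ℝ) * (j.choose k : ℝ) := by
      have h1 := hchoosepos j hjn
      have h2 : (0 : ℝ) < (j.choose k : ℝ) := by exact_mod_cast Nat.choose_pos hkj
      positivity
    have e1 : ((n - (j - k)).choose k : ℝ) * (n.choose (j - k) : ℝ)
        = (n.choose j : ℝ) * (j.choose k : ℝ) := by
      rw [← Nat.cast_mul, ← Nat.cast_mul, Nat.mul_comm, ← hid2]
    have e2 : ((n - k).choose (j - k) : ℝ) * (n.choose k : ℝ)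
        = (n.choose j : ℝ) * (j.choose k : ℝ) := by
      rw [← Nat.cast_mul, ← Nat.cast_mul, Nat.mul_comm, ← hid1]
    have hfin : (n.choose j : ℝ) * (j.choose k : ℝ) * (f T + g j)
        ≤ (n.choose j : ℝ) * (j.choose k : ℝ) * (g (j - k) + g k) := by
      have hsplit : ∑ D ∈ A.powersetCard j, ∑ B ∈ D.powersetCard k,
            (f (T \ (D \ B)) + f (T \ B))
          = (∑ D ∈ A.powersetCard j, ∑ B ∈ D.powersetCard k, f (T \ (D \ B)))
            + ∑ D ∈ A.powersetCard j, ∑ B ∈ D.powersetCard k, f (T \ B) := by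
        rw [← Finset.sum_add_distrib]
        exact Finset.sum_congr rfl fun D _ => Finset.sum_add_distrib
      rw [hsplit, hRHS1, hRHS2, hLHS] at hsum
      have e1' : ((n - (j - k)).choose k : ℝ) * ((n.choose (j - k) : ℝ) * g (j - k))
          = (n.choose j : ℝ) * (j.choose k : ℝ) * g (j - k) := by
        rw [← mul_assoc, e1]
      have e2' : ((n - k).choose (j - k) : ℝ) * ((n.choose k : ℝ) * g k)
          = (n.choose j : ℝ) * (j.choose k : ℝ) * g k := by
        rw [← mul_assoc, e2]
      rw [e1', e2'] at hsum
      have hLHS' : (j.choose k : ℝ) * ((n.choose j : ℝ) * f T + (n.choose j : ℝ) * g j)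
          = (n.choose j : ℝ) * (j.choose k : ℝ) * (f T + g j) := by ring
      rw [hLHS'] at hsum
      calc (n.choose j : ℝ) * (j.choose k : ℝ) * (f T + g j)
          ≤ (n.choose j : ℝ) * (j.choose k : ℝ) * g (j - k)
            + (n.choose j : ℝ) * (j.choose k : ℝ) * g k := hsum
        _ = (n.choose j : ℝ) * (j.choose k : ℝ) * (g (j - k) + g k) := by ring
    exact le_of_mul_le_mul_left (by linarith [hfin]) hcd
  -- telescoping over j from k to n-1
  have htel : ((n : ℝ) - k) * (f T - g k) ≤ (k : ℝ) * M := by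
    have hsum : ∑ j ∈ Finset.Ico k n, (f T + g j) ≤ ∑ j ∈ Finset.Ico k n, (g (j - k) + g k) := by
      refine Finset.sum_le_sum fun j hj => ?_
      obtain ⟨h1, h2⟩ := Finset.mem_Ico.mp hj
      exact hkey j h1 h2.le
    have hcard : (Finset.Ico k n).card = n - k := Nat.card_Ico k n
    have hL : ∑ j ∈ Finset.Ico k n, (f T + g j)
        = ((n - k : ℕ) : ℝ) * f T + ∑ j ∈ Finset.Ico k n, g j := by
      rw [Finset.sum_add_distrib, Finset.sum_const, hcard, nsmul_eq_mul]
    have hR : ∑ j ∈ Finset.Ico k n, (g (j - k) + g k)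
        = ∑ i ∈ Finset.range (n - k), g i + ((n - k : ℕ) : ℝ) * g k := by
      rw [Finset.sum_add_distrib, Finset.sum_const, hcard, nsmul_eq_mul]
      congr 1
      rw [Finset.sum_Ico_eq_sum_range]
      exact Finset.sum_congr rfl fun i _ => by rw [Nat.add_sub_cancel_left]
    have hsplit1 : ∑ j ∈ Finset.Ico k n, g j
        = ∑ j ∈ Finset.range n, g j - ∑ j ∈ Finset.range k, g j := by
      rw [Finset.sum_Ico_eq_sub _ hkn]
    have hsplit2 : ∑ i ∈ Finset.range (n - k), g i
        = ∑ j ∈ Finset.range n, g j - ∑ j ∈ Finset.Ico (n - k) n, g j := by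
      have := Finset.sum_Ico_consecutive g (Nat.zero_le (n - k)) (Nat.sub_le n k)
      rw [← Finset.range_eq_Ico, ← Finset.range_eq_Ico] at this
      linarith [this]
    have hb1 : ∑ j ∈ Finset.range k, g j ≤ (k : ℝ) * M := by
      calc ∑ j ∈ Finset.range k, g j ≤ (Finset.range k).card • M := by
            apply Finset.sum_le_card_nsmul
            intro i hi
            exact hgM i (le_of_lt (Finset.mem_range.mp hi))
        _ = (k : ℝ) * M := by rw [Finset.card_range, nsmul_eq_mul]
    have hb2 : 0 ≤ ∑ j ∈ Finset.Ico (n - k) n, g j :=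
      Finset.sum_nonneg fun j _ => hg0 j
    have hcast : ((n - k : ℕ) : ℝ) = (n : ℝ) - k := by
      exact Nat.cast_sub hkn
    rw [hL, hR, hsplit1, hsplit2, hcast] at hsum
    linarith
  -- final assembly
  have hnk : (0 : ℝ) < (n : ℝ) - k := by
    have : (k : ℝ) < (n : ℝ) := by exact_mod_cast hk
    linarith
  have hfTgk : f T - g k ≤ (k : ℝ) * M / ((n : ℝ) - k) := by
    rw [le_div_iff₀ hnk]
    linarith [htel]
  have hCpos := hchoosepos k hkn
  -- per-B inequality
  have hper : ∀ B ∈ A.powersetCard k, f S - f T + f (T \ B) ≤ f (S \ B) := by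
    intro B hB
    obtain ⟨hBA, _⟩ := Finset.mem_powersetCard.mp hB
    have hsub := hf (S \ B) T
    have hu : (S \ B) ∪ T = S := by
      ext x
      simp only [hTdef, Finset.mem_union, Finset.mem_sdiff, Finset.mem_inter]
      constructor
      · rintro (⟨h, _⟩ | ⟨h, _⟩) <;> exact h
      · intro hxS
        by_cases hxB : x ∈ B
        · exact Or.inr ⟨hxS, hBA hxB⟩
        · exact Or.inl ⟨hxS, hxB⟩
    have hi : (S \ B) ∩ T = T \ B := by
      ext x
      simp only [hTdef, Finset.mem_inter, Finset.mem_sdiff]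
      tauto
    rw [hu, hi] at hsub
    linarith
  have hsum2 : (n.choose k : ℝ) * (f S - f T) + (n.choose k : ℝ) * g k
      ≤ ∑ B ∈ A.powersetCard k, f (S \ B) := by
    have := Finset.sum_le_sum hper
    rw [Finset.sum_add_distrib, Finset.sum_const, Finset.card_powersetCard,
      nsmul_eq_mul, hSg k hkn] at this
    linarith [this]
  rw [ge_iff_le, one_div, ← div_eq_inv_mul]
  rw [le_div_iff₀ hCpos]
  have expand : (f S - (k : ℝ) / ((n : ℝ) - k) * M) ≤ f S - f T + g k := by
    have heq : (k : ℝ) / ((n : ℝ) - k) * M = (k : ℝ) * M / ((n : ℝ) - k) := by ring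
    rw [heq]
    linarith [hfTgk]
  calc (f S - (k : ℝ) / ((n : ℝ) - k) * M) * (n.choose k : ℝ)
      ≤ (f S - f T + g k) * (n.choose k : ℝ) := by
        apply mul_le_mul_of_nonneg_right expand (le_of_lt hCpos)
    _ ≤ ∑ B ∈ A.powersetCard k, f (S \ B) := by
        calc (f S - f T + g k) * (n.choose k : ℝ)
            = (n.choose k : ℝ) * (f S - f T) + (n.choose k : ℝ) * g k := by ring
          _ ≤ _ := hsum2
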